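/- Let x = (a_1,...,a_n) and y = (b_1,...,b_n) be rook-monoid sequences with indices i < j such that b_i = a_j, b_j = a_i, b_j < b_i, and a_k = b_k for all k ∉ {i,j}. Then ℓ(y) = ℓ(x) + 1 if and only if y covers x in the Deodhar order. -/

import Mathlib

/-- coinv: number of pairs i < j with 0 < a i < a j. -/
def coinv (n : ℕ) (a : Fin n → ℕ) : ℕ :=
  (Finset.univ.filter (fun p : Fin n × Fin n => p.1 < p.2 ∧ 0 < a p.1 ∧ a p.1 < a p.2)).card

/-- Length of a rook-monoid sequence: ∑_{i : a_i ≠ 0} (a_i + n - i) - coinv (1-based i). -/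
def rookLen (n : ℕ) (a : Fin n → ℕ) : ℤ :=
  (∑ i : Fin n, if a i ≠ 0 then ((a i : ℤ) + n - (i.val + 1)) else 0) - coinv n a

/-- A rook-monoid sequence: entries in {0,...,n} with distinct nonzero entries. -/
def IsRook (n : ℕ) (a : Fin n → ℕ) : Prop :=
  (∀ i, a i ≤ n) ∧ ∀ i j : Fin n, i ≠ j → a i ≠ 0 → a i ≠ a j

/-- Non-increasing rearrangement of a list. -/
def sortDesc (l : List ℕ) : List ℕ := l.insertionSort (· ≥ ·)

/-- Containment order: entrywise comparison of non-increasing rearrangements. -/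
def contLE (l m : List ℕ) : Prop := List.Forall₂ (· ≤ ·) (sortDesc l) (sortDesc m)

/-- Deodhar order: containment of all truncations. -/
def deodharLE (n : ℕ) (x y : Fin n → ℕ) : Prop :=
  ∀ k : ℕ, k ≤ n → contLE ((List.ofFn x).take k) ((List.ofFn y).take k)

/-- y covers x in the Deodhar order on rook-monoid sequences. -/
def deodharCovers (n : ℕ) (x y : Fin n → ℕ) : Prop :=
  deodharLE n x y ∧ x ≠ y ∧
    ¬∃ z : Fin n → ℕ, IsRook n z ∧
      deodharLE n x z ∧ x ≠ z ∧ deodharLE n z y ∧ z ≠ y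

namespace RookAux

/-- count of entries ≥ q -/
def cnt (q : ℕ) (l : List ℕ) : ℕ := l.countP (fun x => decide (q ≤ x))

lemma cnt_nil (q : ℕ) : cnt q [] = 0 := rfl

lemma cnt_cons (q a : ℕ) (l : List ℕ) :
    cnt q (a :: l) = cnt q l + (if q ≤ a then 1 else 0) := by
  simp [cnt, List.countP_cons]

lemma cnt_append (q : ℕ) (l₁ l₂ : List ℕ) : cnt q (l₁ ++ l₂) = cnt q l₁ + cnt q l₂ :=
  List.countP_append

lemma cnt_mono {l m : List ℕ} (h : List.Forall₂ (· ≤ ·) l m) (q : ℕ) :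
    cnt q l ≤ cnt q m := by
  induction h with
  | nil => exact le_refl _
  | cons hab htl ih =>
      rw [cnt_cons, cnt_cons]
      split_ifs with h1 h2 <;> omega

lemma cnt_sortDesc (q : ℕ) (l : List ℕ) : cnt q (sortDesc l) = cnt q l :=
  (List.perm_insertionSort _ l).countP_eq _

lemma sorted_sortDesc (l : List ℕ) : List.Pairwise (· ≥ ·) (sortDesc l) :=
  List.pairwise_insertionSort _ l

lemma length_sortDesc (l : List ℕ) : (sortDesc l).length = l.length :=
  (List.perm_insertionSort _ l).length_eq

lemma forall₂_of_cnt : ∀ (l m : List ℕ), List.Pairwise (· ≥ ·) l → List.Pairwise (· ≥ ·) m →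
    l.length = m.length → (∀ q, cnt q l ≤ cnt q m) → List.Forall₂ (· ≤ ·) l m := by
  intro l
  induction l with
  | nil =>
      intro m _ _ hlen _
      cases m with
      | nil => exact List.Forall₂.nil
      | cons y ys => simp at hlen
  | cons x xs ih =>
      intro m hl hm hlen hc
      cases m with
      | nil => simp at hlen
      | cons y ys =>
          rw [List.pairwise_cons] at hl hm
          have hxy : x ≤ y := by
            have h1 : 0 < cnt x (x :: xs) := by rw [cnt_cons]; simp
            have h2 : 0 < cnt x (y :: ys) := lt_of_lt_of_le h1 (hc x)
            rw [cnt] at h2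
            rw [List.countP_pos_iff] at h2
            obtain ⟨a, ha, hxa⟩ := h2
            simp at hxa
            cases ha with
            | head => exact hxa
            | tail _ h => exact le_trans hxa (hm.1 _ h)
          refine List.Forall₂.cons hxy (ih ys hl.2 hm.2 (by simpa using hlen) ?_)
          intro q
          rcases le_or_gt q x with hq | hq
          · have := hc q
            rw [cnt_cons, cnt_cons, if_pos hq, if_pos (le_trans hq hxy)] at this
            omega
          · have : cnt q xs = 0 := by
              rw [cnt, List.countP_eq_zero]
              intro a ha
              simp only [decide_eq_true_eq]
              intro hqa
              exact absurd (le_trans hqa (hl.1 a ha)) (not_le.mpr hq)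
            omega

lemma contLE_iff_cnt {l m : List ℕ} (hlen : l.length = m.length) :
    contLE l m ↔ ∀ q, cnt q l ≤ cnt q m := by
  constructor
  · intro h q
    rw [← cnt_sortDesc q l, ← cnt_sortDesc q m]
    exact cnt_mono h q
  · intro h
    refine forall₂_of_cnt _ _ (sorted_sortDesc l) (sorted_sortDesc m) ?_ ?_
    · rw [length_sortDesc, length_sortDesc, hlen]
    · intro q; rw [cnt_sortDesc, cnt_sortDesc]; exact h q

/-- prefix count matrix -/
def R (n : ℕ) (x : Fin n → ℕ) (k q : ℕ) : ℕ := cnt q ((List.ofFn x).take k)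

lemma R_zero (n : ℕ) (x : Fin n → ℕ) (q : ℕ) : R n x 0 q = 0 := rfl

lemma R_succ (n : ℕ) (x : Fin n → ℕ) (k : ℕ) (hk : k < n) (q : ℕ) :
    R n x (k + 1) q = R n x k q + (if q ≤ x ⟨k, hk⟩ then 1 else 0) := by
  rw [R, R, List.take_succ, cnt_append, List.getElem?_ofFn]
  congr 1
  rw [dif_pos hk]
  simp [cnt_cons, cnt_nil]

lemma deodharLE_iff {n : ℕ} (x y : Fin n → ℕ) :
    deodharLE n x y ↔ ∀ k, k ≤ n → ∀ q, R n x k q ≤ R n y k q := by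
  have hlen : ∀ (x : Fin n → ℕ) k, ((List.ofFn x).take k).length = min k n := by
    intro x k; rw [List.length_take, List.length_ofFn]
  constructor
  · intro h k hk q
    exact (contLE_iff_cnt (by rw [hlen, hlen])).mp (h k hk) q
  · intro h k hk
    exact (contLE_iff_cnt (by rw [hlen, hlen])).mpr (h k hk)

lemma eq_of_R_eq {n : ℕ} (x y : Fin n → ℕ)
    (h : ∀ k, k ≤ n → ∀ q, R n x k q = R n y k q) : x = y := by
  funext p
  have hp : p.val < n := p.isLt
  have key : ∀ q, (if q ≤ x p then 1 else 0 : ℕ) = (if q ≤ y p then 1 else 0) := by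
    intro q
    have h1 := R_succ n x p.val hp q
    have h2 := R_succ n y p.val hp q
    have e1 := h p.val (le_of_lt hp) q
    have e2 := h (p.val + 1) hp q
    rw [Fin.eta] at h1 h2
    omega
  by_contra hne
  rcases Nat.lt_or_ge (x p) (y p) with hlt | hge
  · have := key (y p)
    rw [if_neg (by omega), if_pos le_rfl] at this
    exact absurd this (by omega)
  · have hlt : y p < x p := by omega
    have := key (x p)
    rw [if_pos le_rfl, if_neg (by omega)] at this
    exact absurd this (by omega)

end RookAux

namespace RookAux

lemma R_swap {n : ℕ} (x y : Fin n → ℕ) (i j : Fin n) (hij : i < j) (hst : x i ≤ x j)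
    (hyi : y i = x j) (hyj : y j = x i) (hxy : ∀ k, k ≠ i → k ≠ j → x k = y k) :
    ∀ k, k ≤ n → ∀ q, R n y k q =
      R n x k q + (if i.val < k ∧ k ≤ j.val ∧ x i < q ∧ q ≤ x j then 1 else 0) := by
  intro k
  induction k with
  | zero =>
      intro _ q
      rw [R_zero, R_zero, if_neg (by omega)]
  | succ k ih =>
      intro hk q
      have hkn : k < n := by omega
      have ihq := ih (by omega) q
      rw [R_succ n y k hkn q, R_succ n x k hkn q, ihq]
      rcases eq_or_ne k i.val with hki | hki
      · have hfin : (⟨k, hkn⟩ : Fin n) = i := by exact Fin.ext hki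
        rw [hfin, hyi]
        have hij' : i.val < j.val := hij
        split_ifs <;> omega
      · rcases eq_or_ne k j.val with hkj | hkj
        · have hfin : (⟨k, hkn⟩ : Fin n) = j := by exact Fin.ext hkj
          rw [hfin, hyj]
          have hij' : i.val < j.val := hij
          split_ifs <;> omega
        · have hfin : x ⟨k, hkn⟩ = y ⟨k, hkn⟩ := by
            apply hxy
            · intro h; exact hki (by rw [← h])
            · intro h; exact hkj (by rw [← h])
          rw [← hfin]
          have hij' : i.val < j.val := hij
          split_ifs <;> omega

end RookAux

namespace RookAux

lemma no_intermediate {n : ℕ} (a b z : Fin n → ℕ) (i j : Fin n) (hij : i < j)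
    (h1 : b i = a j) (h2 : b j = a i) (h3 : a i < a j)
    (hne : ∀ k, k ≠ i → k ≠ j → a k = b k)
    (hC : ∀ k : Fin n, i < k → k < j → (a k < a i ∨ a j < a k))
    (haz : deodharLE n a z) (hzb : deodharLE n z b) : z = a ∨ z = b := by
  set s := a i with hs
  set t := a j with ht
  have hij' : i.val < j.val := hij
  have hjn : j.val < n := j.isLt
  have hRb : ∀ k, k ≤ n → ∀ q, R n b k q =
      R n a k q + (if i.val < k ∧ k ≤ j.val ∧ s < q ∧ q ≤ t then 1 else 0) :=
    R_swap a b i j hij (le_of_lt h3) h1 h2 hne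
  have hza := (deodharLE_iff a z).mp haz
  have hzb' := (deodharLE_iff z b).mp hzb
  have sand : ∀ k, k ≤ n → ∀ q, R n a k q ≤ R n z k q ∧
      R n z k q ≤ R n a k q + (if i.val < k ∧ k ≤ j.val ∧ s < q ∧ q ≤ t then 1 else 0) := by
    intro k hk q
    exact ⟨hza k hk q, by rw [← hRb k hk q]; exact hzb' k hk q⟩
  have out : ∀ k, k ≤ n → ∀ q, ¬(i.val < k ∧ k ≤ j.val ∧ s < q ∧ q ≤ t) →
      R n z k q = R n a k q := by
    intro k hk q hq
    have := sand k hk q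
    rw [if_neg hq] at this
    omega
  have c1 : ∀ m : ℕ, i.val < m → m + 1 ≤ j.val → ∀ q, s < q → q ≤ t →
      (R n z (m+1) q = R n a (m+1) q + 1 ↔ R n z m q = R n a m q + 1) := by
    intro m him hmj q hsq hqt
    have hmn : m < n := by omega
    set p : Fin n := (⟨m, hmn⟩ : Fin n) with hp
    have hip : i < p := by rw [hp, Fin.lt_def]; simpa using him
    have hpj : p < j := by rw [hp, Fin.lt_def]; simp only [Fin.val_mk]; omega
    have hap := hC p hip hpj
    have stepz := R_succ n z m hmn q
    have stepa := R_succ n a m hmn q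
    rw [← hp] at stepz stepa
    have sm := sand m (by omega) q
    have sm1 := sand (m+1) (by omega) q
    rw [if_pos ⟨him, by omega, hsq, hqt⟩] at sm
    rw [if_pos ⟨by omega, by omega, hsq, hqt⟩] at sm1
    rcases hap with hlt | hgt
    · have hzp : z p < s := by
        by_contra hzp
        push_neg at hzp
        have stepzs := R_succ n z m hmn s
        have stepas := R_succ n a m hmn s
        rw [← hp] at stepzs stepas
        have outm := out m (by omega) s (by omega)
        have outm1 := out (m+1) (by omega) s (by omega)
        rw [if_pos hzp] at stepzs
        rw [if_neg (by omega)] at stepas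
        omega
      rw [if_neg (by omega)] at stepz
      rw [if_neg (by omega)] at stepa
      omega
    · have hzp : t < z p := by
        by_contra hzp
        push_neg at hzp
        have stepzs := R_succ n z m hmn (t+1)
        have stepas := R_succ n a m hmn (t+1)
        rw [← hp] at stepzs stepas
        have outm := out m (by omega) (t+1) (by omega)
        have outm1 := out (m+1) (by omega) (t+1) (by omega)
        rw [if_neg (by omega)] at stepzs
        rw [if_pos (by omega)] at stepas
        omega
      rw [if_pos (by omega)] at stepz
      rw [if_pos (by omega)] at stepa
      omega
  have chain : ∀ q, s < q → q ≤ t → ∀ m, i.val + 1 ≤ m → m ≤ j.val →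
      (R n z m q = R n a m q + 1 ↔ R n z (i.val+1) q = R n a (i.val+1) q + 1) := by
    intro q hsq hqt m
    induction m with
    | zero => omega
    | succ m ih =>
        intro hm hmj
        rcases Nat.lt_or_ge i.val m with him | him
        · rw [c1 m him hmj q hsq hqt]
          exact ih (by omega) (by omega)
        · have hmi : m = i.val := by omega
          rw [hmi]
  have rowi : ∀ q, s < q → q ≤ t →
      (R n z (i.val+1) q = R n a (i.val+1) q + 1 ↔ q ≤ z i) := by
    intro q hsq hqt
    have hin : i.val < n := by omega
    have stepz := R_succ n z i.val hin q
    have stepa := R_succ n a i.val hin q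
    rw [Fin.eta] at stepz stepa
    have outi := out i.val (by omega) q (by omega)
    rw [if_neg (by omega : ¬ q ≤ s)] at stepa
    constructor
    · intro hP; by_contra hq; rw [if_neg hq] at stepz; omega
    · intro hq; rw [if_pos hq] at stepz; omega
  have rowj : ∀ q, s < q → q ≤ t →
      (R n z j.val q = R n a j.val q + 1 ↔ z j < q) := by
    intro q hsq hqt
    have stepz := R_succ n z j.val hjn q
    have stepa := R_succ n a j.val hjn q
    rw [Fin.eta] at stepz stepa
    have outj := out (j.val+1) (by omega) q (by omega)
    rw [if_pos (by omega : q ≤ t)] at stepa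
    have sj := sand j.val (by omega) q
    rw [if_pos ⟨hij', le_rfl, hsq, hqt⟩] at sj
    constructor
    · intro hP; by_contra hq; push_neg at hq; rw [if_pos hq] at stepz; omega
    · intro hq; rw [if_neg (by omega)] at stepz; omega
  have hst : s < t := h3
  by_cases hP : R n z (i.val+1) (s+1) = R n a (i.val+1) (s+1) + 1
  · right
    apply eq_of_R_eq
    intro k hk q
    by_cases hin : i.val < k ∧ k ≤ j.val ∧ s < q ∧ q ≤ t
    · rw [hRb k hk q, if_pos hin]
      have hPj : R n z j.val (s+1) = R n a j.val (s+1) + 1 :=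
        (chain (s+1) (by omega) (by omega) j.val (by omega) le_rfl).mpr hP
      have hzj : z j < s+1 := (rowj (s+1) (by omega) (by omega)).mp hPj
      have hPjq : R n z j.val q = R n a j.val q + 1 :=
        (rowj q hin.2.2.1 hin.2.2.2).mpr (by omega)
      exact (chain q hin.2.2.1 hin.2.2.2 k (by omega) hin.2.1).mpr
        ((chain q hin.2.2.1 hin.2.2.2 j.val (by omega) le_rfl).mp hPjq)
    · rw [hRb k hk q, if_neg hin]
      exact out k hk q hin
  · left
    apply eq_of_R_eq
    intro k hk q
    by_cases hin : i.val < k ∧ k ≤ j.val ∧ s < q ∧ q ≤ t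
    · have hnotP : ¬ (R n z k q = R n a k q + 1) := by
        intro hPk
        have hP1 : R n z (i.val+1) q = R n a (i.val+1) q + 1 :=
          (chain q hin.2.2.1 hin.2.2.2 k (by omega) hin.2.1).mp hPk
        have hzi : q ≤ z i := (rowi q hin.2.2.1 hin.2.2.2).mp hP1
        exact hP ((rowi (s+1) (by omega) (by omega)).mpr (by omega))
      have := sand k hk q
      rw [if_pos hin] at this
      omega
    · exact out k hk q hin

end RookAux
namespace RookAux

lemma sum_pair {n : ℕ} (i j : Fin n) (hij : i ≠ j) (A B : ℤ) :
    ∑ k : Fin n, (if k = i then A else if k = j then B else 0) = A + B := by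
  have hpt : ∀ k : Fin n, (if k = i then A else if k = j then B else 0)
      = (if k = i then A else 0) + (if k = j then B else 0) := by
    intro k
    by_cases h1 : k = i
    · subst h1; rw [if_pos rfl, if_pos rfl, if_neg hij]; ring
    · simp only [if_neg h1]; ring
  rw [Finset.sum_congr rfl (fun k _ => hpt k), Finset.sum_add_distrib,
    Finset.sum_ite_eq', Finset.sum_ite_eq']
  simp

lemma coinv_cast {n : ℕ} (x : Fin n → ℕ) :
    (coinv n x : ℤ) = ∑ p : Fin n, ∑ q : Fin n,
      (if p < q ∧ 0 < x p ∧ x p < x q then (1:ℤ) else 0) := by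
  rw [coinv, Finset.card_filter]
  push_cast
  rw [Fintype.sum_prod_type]

lemma sum_between {n : ℕ} (i j : Fin n) (hij : i < j) :
    (∑ q : Fin n, (if i < q ∧ q < j then (1:ℤ) else 0)) = (j.val : ℤ) - i.val - 1 := by
  have h1 : ∀ q : Fin n, (if i < q ∧ q < j then (1:ℤ) else 0)
      = ((if i < q ∧ q < j then 1 else 0 : ℕ) : ℤ) := by
    intro q; split_ifs <;> simp
  rw [Finset.sum_congr rfl (fun q _ => h1 q), ← Nat.cast_sum, ← Finset.card_filter]
  have h2 : Finset.filter (fun q : Fin n => i < q ∧ q < j) Finset.univ = Finset.Ioo i j := by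
    ext q; simp [Finset.mem_Ioo]
  rw [h2, Fin.card_Ioo]
  have : i.val < j.val := hij
  omega

lemma sum_decompose {n : ℕ} (i j : Fin n) (hij : i ≠ j) (g : Fin n → Fin n → ℤ)
    (h0 : ∀ p q, p ≠ i → p ≠ j → q ≠ i → q ≠ j → g p q = 0) :
    ∑ p : Fin n, ∑ q : Fin n, g p q =
      (∑ q : Fin n, g i q) + (∑ q : Fin n, g j q) +
      ((∑ p : Fin n, (if p ≠ i ∧ p ≠ j then g p i else 0)) +
       (∑ p : Fin n, (if p ≠ i ∧ p ≠ j then g p j else 0))) := by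
  have hpt : ∀ p q : Fin n, g p q =
      (if p = i then g i q else 0) + (if p = j then g j q else 0) +
      ((if (p ≠ i ∧ p ≠ j) ∧ q = i then g p i else 0) +
       (if (p ≠ i ∧ p ≠ j) ∧ q = j then g p j else 0)) := by
    intro p q
    by_cases hpi : p = i
    · subst hpi
      rw [if_pos rfl, if_neg hij, if_neg (by tauto), if_neg (by tauto)]; ring
    · by_cases hpj : p = j
      · subst hpj
        rw [if_neg hpi, if_pos rfl, if_neg (by tauto), if_neg (by tauto)]; ring
      · rw [if_neg hpi, if_neg hpj]
        by_cases hqi : q = i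
        · subst hqi
          rw [if_pos ⟨⟨hpi, hpj⟩, rfl⟩, if_neg (by exact fun h => hij h.2)]
          ring
        · by_cases hqj : q = j
          · subst hqj
            rw [if_neg (by tauto), if_pos ⟨⟨hpi, hpj⟩, rfl⟩]; ring
          · rw [if_neg (by tauto), if_neg (by tauto), h0 p q hpi hpj hqi hqj]; ring
  have step1 : ∀ p : Fin n, ∑ q : Fin n, g p q =
      (if p = i then ∑ q : Fin n, g i q else 0) + (if p = j then ∑ q : Fin n, g j q else 0) +
      ((if p ≠ i ∧ p ≠ j then g p i else 0) + (if p ≠ i ∧ p ≠ j then g p j else 0)) := by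
    intro p
    rw [Finset.sum_congr rfl (fun q _ => hpt p q), Finset.sum_add_distrib,
      Finset.sum_add_distrib, Finset.sum_add_distrib]
    congr 1
    · congr 1
      · by_cases hpi : p = i <;> simp [hpi]
      · by_cases hpj : p = j <;> simp [hpj]
    · congr 1
      · by_cases hp : p ≠ i ∧ p ≠ j
        · rw [if_pos hp]
          have hq : ∀ q : Fin n, (if (p ≠ i ∧ p ≠ j) ∧ q = i then g p i else 0)
              = (if q = i then g p i else 0) := by
            intro q
            by_cases hqq : q = i
            · rw [if_pos ⟨hp, hqq⟩, if_pos hqq]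
            · rw [if_neg (by tauto), if_neg hqq]
          rw [Finset.sum_congr rfl (fun q _ => hq q), Finset.sum_ite_eq']
          simp
        · rw [if_neg hp]
          have hq : ∀ q : Fin n, (if (p ≠ i ∧ p ≠ j) ∧ q = i then g p i else 0) = 0 := by
            intro q; rw [if_neg (by tauto)]
          rw [Finset.sum_congr rfl (fun q _ => hq q)]
          simp
      · by_cases hp : p ≠ i ∧ p ≠ j
        · rw [if_pos hp]
          have hq : ∀ q : Fin n, (if (p ≠ i ∧ p ≠ j) ∧ q = j then g p j else 0)
              = (if q = j then g p j else 0) := by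
            intro q
            by_cases hqq : q = j
            · rw [if_pos ⟨hp, hqq⟩, if_pos hqq]
            · rw [if_neg (by tauto), if_neg hqq]
          rw [Finset.sum_congr rfl (fun q _ => hq q), Finset.sum_ite_eq']
          simp
        · rw [if_neg hp]
          have hq : ∀ q : Fin n, (if (p ≠ i ∧ p ≠ j) ∧ q = j then g p j else 0) = 0 := by
            intro q; rw [if_neg (by tauto)]
          rw [Finset.sum_congr rfl (fun q _ => hq q)]
          simp
  rw [Finset.sum_congr rfl (fun p _ => step1 p), Finset.sum_add_distrib,
    Finset.sum_add_distrib, Finset.sum_add_distrib, Finset.sum_ite_eq', Finset.sum_ite_eq']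
  simp

end RookAux
namespace RookAux

set_option maxHeartbeats 1600000 in
lemma len_formula {n : ℕ} (a b : Fin n → ℕ) (ha : IsRook n a)
    (i j : Fin n) (hij : i < j) (h1 : b i = a j) (h2 : b j = a i) (h3 : a i < a j)
    (hne : ∀ k, k ≠ i → k ≠ j → a k = b k) :
    rookLen n b = rookLen n a + 1 +
      ∑ k : Fin n, (if i < k ∧ k < j ∧ a i < a k ∧ a k < a j then (2:ℤ)
        else if i < k ∧ k < j ∧ a i = 0 ∧ a k = 0 then 1 else 0) := by
  have hijne : i ≠ j := ne_of_lt hij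
  have hij' : i.val < j.val := hij
  have hvij : i.val ≠ j.val := by omega
  have htne : a j ≠ 0 := by omega
  -- sum part
  have hsum : (∑ k : Fin n, (if b k ≠ 0 then ((b k:ℤ) + n - (k.val+1)) else 0))
      - (∑ k : Fin n, (if a k ≠ 0 then ((a k:ℤ) + n - (k.val+1)) else 0)) =
      (((a j : ℤ) + n - (i.val+1)) - (if a i ≠ 0 then ((a i:ℤ) + n - (i.val+1)) else 0)) +
      ((if a i ≠ 0 then ((a i:ℤ) + n - (j.val+1)) else 0) - ((a j:ℤ) + n - (j.val+1))) := by
    rw [← Finset.sum_sub_distrib]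
    have hpt : ∀ k : Fin n,
        (if b k ≠ 0 then ((b k:ℤ) + n - (k.val+1)) else 0)
          - (if a k ≠ 0 then ((a k:ℤ) + n - (k.val+1)) else 0)
        = (if k = i then
            (((a j : ℤ) + n - (i.val+1)) - (if a i ≠ 0 then ((a i:ℤ) + n - (i.val+1)) else 0))
          else if k = j then
            ((if a i ≠ 0 then ((a i:ℤ) + n - (j.val+1)) else 0) - ((a j:ℤ) + n - (j.val+1)))
          else 0) := by
      intro k
      by_cases hki : k = i
      · rw [hki, h1]
        simp only [Fin.ext_iff]
        split_ifs <;> omega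
      · by_cases hkj : k = j
        · rw [hkj, h2]
          simp only [Fin.ext_iff]
          split_ifs <;> omega
        · rw [← hne k hki hkj, sub_self]
          simp only [Fin.ext_iff]
          have hvki : k.val ≠ i.val := fun h => hki (Fin.ext h)
          have hvkj : k.val ≠ j.val := fun h => hkj (Fin.ext h)
          split_ifs <;> omega
    rw [Finset.sum_congr rfl (fun k _ => hpt k), sum_pair i j hijne]
  -- coinv part
  set G : Fin n → Fin n → ℤ := fun p q =>
    (if p < q ∧ 0 < b p ∧ b p < b q then (1:ℤ) else 0) -
    (if p < q ∧ 0 < a p ∧ a p < a q then (1:ℤ) else 0) with hG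
  have hG0 : ∀ p q, p ≠ i → p ≠ j → q ≠ i → q ≠ j → G p q = 0 := by
    intro p q hpi hpj hqi hqj
    simp only [hG]
    rw [← hne p hpi hpj, ← hne q hqi hqj, sub_self]
  have hcast : (coinv n b : ℤ) - coinv n a = ∑ p : Fin n, ∑ q : Fin n, G p q := by
    rw [coinv_cast, coinv_cast, ← Finset.sum_sub_distrib]
    refine Finset.sum_congr rfl (fun p _ => ?_)
    rw [← Finset.sum_sub_distrib]
  have hdec := sum_decompose i j hijne G hG0
  -- pointwise key identity
  have key0 : ∀ q : Fin n,
      G i q + G j q + ((if q ≠ i ∧ q ≠ j then G q i else 0) +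
        (if q ≠ i ∧ q ≠ j then G q j else 0))
      + (if i < q ∧ q < j ∧ a i < a q ∧ a q < a j then (2:ℤ)
         else if i < q ∧ q < j ∧ a i = 0 ∧ a q = 0 then 1 else 0)
      = (if a i = 0 ∧ i < q ∧ q < j then (1:ℤ) else 0)
        + (if q = j then
            ((((a j : ℤ) + n - (i.val+1)) - (if a i ≠ 0 then ((a i:ℤ) + n - (i.val+1)) else 0)) +
             ((if a i ≠ 0 then ((a i:ℤ) + n - (j.val+1)) else 0) - ((a j:ℤ) + n - (j.val+1)))
             - 1 - (if a i = 0 then ((j.val:ℤ) - i.val - 1) else 0))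
          else 0) := by
    intro q
    by_cases hqi : q = i
    · rw [hqi]
      simp only [hG]
      rw [h1, h2]
      simp only [Fin.lt_def, Fin.ext_iff]
      split_ifs <;> omega
    · by_cases hqj : q = j
      · rw [hqj]
        simp only [hG]
        rw [h1, h2]
        simp only [Fin.lt_def, Fin.ext_iff]
        split_ifs <;> omega
      · have hbq : a q = b q := hne q hqi hqj
        have hvqi : q.val ≠ i.val := fun h => hqi (Fin.ext h)
        have hvqj : q.val ≠ j.val := fun h => hqj (Fin.ext h)
        have haj_q : a j ≠ a q := ha.2 j q (fun e => hqj e.symm) htne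
        have hai_q : a i = 0 ∨ a i ≠ a q := by
          by_cases h0 : a i = 0
          · exact Or.inl h0
          · exact Or.inr (ha.2 i q (fun e => hqi e.symm) h0)
        simp only [hG]
        rw [h1, h2, ← hbq]
        simp only [Fin.lt_def, Fin.ext_iff]
        have hzone : q.val < i.val ∨ (i.val < q.val ∧ q.val < j.val) ∨ j.val < q.val := by
          omega
        rcases hzone with hz | ⟨hz1, hz2⟩ | hz
        · simp only [show ¬(i.val < q.val) from by omega, show ¬(j.val < q.val) from by omega,
            show (q.val < i.val) from hz, show (q.val < j.val) from by omega,
            show ¬(q.val = j.val) from by omega, false_and, and_false, if_false, true_and, and_true, not_true, not_false_iff,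
            eq_self_iff_true, iff_true, if_true]
          split_ifs <;> omega
        · simp only [show (i.val < q.val) from hz1, show ¬(j.val < q.val) from by omega,
            show ¬(q.val < i.val) from by omega, show (q.val < j.val) from hz2,
            show ¬(q.val = j.val) from by omega, false_and, and_false, if_false, true_and, and_true, not_true, not_false_iff,
            eq_self_iff_true, iff_true, if_true]
          split_ifs <;> omega
        · simp only [show (i.val < q.val) from by omega, show (j.val < q.val) from hz,
            show ¬(q.val < i.val) from by omega, show ¬(q.val < j.val) from by omega,
            show ¬(q.val = j.val) from by omega, false_and, and_false, if_false, true_and, and_true, not_true, not_false_iff,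
            eq_self_iff_true, iff_true, if_true]
          split_ifs <;> omega
  -- sum up the key identity
  have hkey := Finset.sum_congr (rfl : (Finset.univ : Finset (Fin n)) = Finset.univ) (fun q _ => key0 q)
  simp only [Finset.sum_add_distrib] at hkey
  have hrhs1 : (∑ q : Fin n, (if a i = 0 ∧ i < q ∧ q < j then (1:ℤ) else 0))
      = (if a i = 0 then ((j.val:ℤ) - i.val - 1) else 0) := by
    by_cases hs0 : a i = 0
    · rw [if_pos hs0]
      have hpt : ∀ q : Fin n, (if a i = 0 ∧ i < q ∧ q < j then (1:ℤ) else 0)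
          = (if i < q ∧ q < j then (1:ℤ) else 0) := by
        intro q
        by_cases hqq : i < q ∧ q < j
        · rw [if_pos ⟨hs0, hqq.1, hqq.2⟩, if_pos hqq]
        · rw [if_neg (by tauto), if_neg hqq]
      rw [Finset.sum_congr rfl (fun q _ => hpt q), sum_between i j hij]
    · rw [if_neg hs0]
      have hpt : ∀ q : Fin n, (if a i = 0 ∧ i < q ∧ q < j then (1:ℤ) else 0) = 0 := by
        intro q; rw [if_neg (by tauto)]
      rw [Finset.sum_congr rfl (fun q _ => hpt q)]
      simp
  have hrhs2 : (∑ q : Fin n, (if q = j then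
            ((((a j : ℤ) + n - (i.val+1)) - (if a i ≠ 0 then ((a i:ℤ) + n - (i.val+1)) else 0)) +
             ((if a i ≠ 0 then ((a i:ℤ) + n - (j.val+1)) else 0) - ((a j:ℤ) + n - (j.val+1)))
             - 1 - (if a i = 0 then ((j.val:ℤ) - i.val - 1) else 0))
          else 0)) =
            ((((a j : ℤ) + n - (i.val+1)) - (if a i ≠ 0 then ((a i:ℤ) + n - (i.val+1)) else 0)) +
             ((if a i ≠ 0 then ((a i:ℤ) + n - (j.val+1)) else 0) - ((a j:ℤ) + n - (j.val+1)))
             - 1 - (if a i = 0 then ((j.val:ℤ) - i.val - 1) else 0)) := by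
    rw [Finset.sum_ite_eq']; simp
  rw [hrhs1, hrhs2] at hkey
  -- final assembly
  simp only [rookLen]
  rw [hdec] at hcast
  by_cases hs0 : a i = 0
  · simp only [if_neg (show ¬ a i ≠ 0 by omega)] at hsum
    simp only [if_pos hs0, if_neg (show ¬ a i ≠ 0 by omega)] at hkey
    linarith [hsum, hcast, hkey]
  · simp only [if_pos (show a i ≠ 0 from hs0)] at hsum
    simp only [if_neg hs0, if_pos (show a i ≠ 0 from hs0)] at hkey
    linarith [hsum, hcast, hkey]

end RookAux

open RookAux

theorem swap_len_iff_covers (n : ℕ) (a b : Fin n → ℕ) (ha : IsRook n a) (hb : IsRook n b)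
    (i j : Fin n) (hij : i < j) (h1 : b i = a j) (h2 : b j = a i) (h3 : b j < b i)
    (hne : ∀ k, k ≠ i → k ≠ j → a k = b k) :
    rookLen n b = rookLen n a + 1 ↔ deodharCovers n a b := by
  have hst : a i < a j := by rw [h1, h2] at h3; exact h3
  have hij' : i.val < j.val := hij
  have hijne : i ≠ j := ne_of_lt hij
  have htne : a j ≠ 0 := by omega
  have hlen := len_formula a b ha i j hij h1 h2 hst hne
  have hRb := R_swap a b i j hij (le_of_lt hst) h1 h2 hne
  -- characterization: length condition iff "no k between with a i ≤ a k < a j"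
  have hC : rookLen n b = rookLen n a + 1 ↔
      (∀ k : Fin n, i < k → k < j → (a k < a i ∨ a j < a k)) := by
    constructor
    · intro h
      have hS : (∑ k : Fin n, (if i < k ∧ k < j ∧ a i < a k ∧ a k < a j then (2:ℤ)
          else if i < k ∧ k < j ∧ a i = 0 ∧ a k = 0 then 1 else 0)) = 0 := by
        rw [hlen] at h; linarith
      have hWnn : ∀ k ∈ (Finset.univ : Finset (Fin n)),
          0 ≤ (if i < k ∧ k < j ∧ a i < a k ∧ a k < a j then (2:ℤ)
          else if i < k ∧ k < j ∧ a i = 0 ∧ a k = 0 then 1 else 0) := by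
        intro k _; split_ifs <;> norm_num
      have hW0 := (Finset.sum_eq_zero_iff_of_nonneg hWnn).mp hS
      intro k hik hkj
      have hWk := hW0 k (Finset.mem_univ k)
      have haj_k : a j ≠ a k := ha.2 j k (ne_of_gt hkj) htne
      have hai_k : a i ≠ 0 → a i ≠ a k := fun h0 => ha.2 i k (ne_of_lt hik) h0
      rcases Nat.lt_trichotomy (a k) (a i) with hx | hx | hx
      · exact Or.inl hx
      · exfalso
        have h0 : a i = 0 := by
          by_contra h0; exact (hai_k h0) hx.symm
        rw [if_neg (by rintro ⟨_, _, c3, _⟩; omega),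
          if_pos ⟨hik, hkj, h0, by omega⟩] at hWk
        norm_num at hWk
      · rcases Nat.lt_trichotomy (a k) (a j) with hy | hy | hy
        · exfalso
          rw [if_pos ⟨hik, hkj, hx, hy⟩] at hWk
          norm_num at hWk
        · exact absurd hy.symm haj_k
        · exact Or.inr hy
    · intro hCc
      rw [hlen]
      have hS : (∑ k : Fin n, (if i < k ∧ k < j ∧ a i < a k ∧ a k < a j then (2:ℤ)
          else if i < k ∧ k < j ∧ a i = 0 ∧ a k = 0 then 1 else 0)) = 0 := by
        apply Finset.sum_eq_zero
        intro k _
        by_cases hik : i < k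
        · by_cases hkj : k < j
          · have hCk := hCc k hik hkj
            rw [if_neg (by rintro ⟨_, _, c3, c4⟩; rcases hCk with h | h <;> omega),
              if_neg (by rintro ⟨_, _, c3, c4⟩; rcases hCk with h | h <;> omega)]
          · rw [if_neg (fun c => hkj c.2.1), if_neg (fun c => hkj c.2.1)]
        · rw [if_neg (fun c => hik c.1), if_neg (fun c => hik c.1)]
      rw [hS]; ring
  rw [hC]
  constructor
  · -- C → covers
    intro hCc
    refine ⟨?_, ?_, ?_⟩
    · apply (deodharLE_iff a b).mpr
      intro k hk q
      rw [hRb k hk q]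
      split_ifs <;> omega
    · intro h
      have := congrFun h i
      rw [h1] at this
      omega
    · rintro ⟨z, hzrook, haz, hazne, hzb, hzbne⟩
      rcases no_intermediate a b z i j hij h1 h2 hst hne hCc haz hzb with h | h
      · exact hazne h.symm
      · exact hzbne h
  · -- covers → C
    intro hcov
    by_contra hnc
    push_neg at hnc
    obtain ⟨k, hik, hkj, hk1, hk2⟩ := hnc
    have hik' : i.val < k.val := hik
    have hkj' : k.val < j.val := hkj
    have haj_k : a j ≠ a k := ha.2 j k (ne_of_gt hkj) htne
    have hkval : a k < a j := by omega
    apply hcov.2.2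
    by_cases hcs : a i < a k
    · -- intermediate z: swap positions i and k
      refine ⟨fun m => a (Equiv.swap i k m), ?_, ?_, ?_, ?_, ?_⟩
      · exact ⟨fun m => ha.1 _, fun p r hpr h0 =>
          ha.2 _ _ (fun e => hpr ((Equiv.swap i k).injective e)) h0⟩
      · have hRz := R_swap a (fun m => a (Equiv.swap i k m)) i k hik (le_of_lt hcs)
          (by simp) (by simp) (fun m hmi hmk => by simp [Equiv.swap_apply_of_ne_of_ne hmi hmk])
        apply (deodharLE_iff _ _).mpr
        intro kk hkk q
        rw [hRz kk hkk q]
        split_ifs <;> omega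
      · intro h
        have := congrFun h i
        simp [Equiv.swap_apply_left] at this
        omega
      · have hRz := R_swap a (fun m => a (Equiv.swap i k m)) i k hik (le_of_lt hcs)
          (by simp) (by simp) (fun m hmi hmk => by simp [Equiv.swap_apply_of_ne_of_ne hmi hmk])
        apply (deodharLE_iff _ _).mpr
        intro kk hkk q
        rw [hRz kk hkk q, hRb kk hkk q]
        split_ifs <;> omega
      · intro h
        have := congrFun h j
        rw [h2] at this
        have hji : j ≠ i := Ne.symm hijne
        have hjk : j ≠ k := Ne.symm (ne_of_lt hkj)
        simp [Equiv.swap_apply_of_ne_of_ne hji hjk] at this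
        omega
    · -- a k = a i hence a i = 0 : intermediate z: swap positions k and j
      have hki : a k = a i := by omega
      have h0 : a i = 0 := by
        by_contra h0
        exact (ha.2 i k (ne_of_lt hik) h0) hki.symm
      have hk0 : a k = 0 := by omega
      refine ⟨fun m => a (Equiv.swap k j m), ?_, ?_, ?_, ?_, ?_⟩
      · exact ⟨fun m => ha.1 _, fun p r hpr hp0 =>
          ha.2 _ _ (fun e => hpr ((Equiv.swap k j).injective e)) hp0⟩
      · have hRz := R_swap a (fun m => a (Equiv.swap k j m)) k j hkj (by omega)
          (by simp) (by simp) (fun m hmk hmj => by simp [Equiv.swap_apply_of_ne_of_ne hmk hmj])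
        apply (deodharLE_iff _ _).mpr
        intro kk hkk q
        rw [hRz kk hkk q]
        split_ifs <;> omega
      · intro h
        have := congrFun h k
        simp [Equiv.swap_apply_left] at this
        omega
      · have hRz := R_swap a (fun m => a (Equiv.swap k j m)) k j hkj (by omega)
          (by simp) (by simp) (fun m hmk hmj => by simp [Equiv.swap_apply_of_ne_of_ne hmk hmj])
        apply (deodharLE_iff _ _).mpr
        intro kk hkk q
        rw [hRz kk hkk q, hRb kk hkk q]
        split_ifs <;> omega
      · intro h
        have := congrFun h i
        rw [h1] at this
        have hik2 : i ≠ k := ne_of_lt hik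
        simp [Equiv.swap_apply_of_ne_of_ne hik2 hijne] at this
        omega
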